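/- Any simplex reachable from a k-dimensional source simplex σ in the V∂-graph of the bubblesort field V_bs has all its tuple components among the components of σ; consequently at most (k+1)^{k+1} distinct source simplices are reachable from σ. -/

import Mathlib

lemma gD_insert_lt (l : List ℤ) (n i : ℕ) (a : ℤ) (h : i < n) (hn : n ≤ l.length) :
    (l.insertIdx n a).getD i 0 = l.getD i 0 := by
  have hi : i < l.length := lt_of_lt_of_le h hn
  have hi' : i < (l.insertIdx n a).length := by
    rw [List.length_insertIdx_of_le_length hn]; omega
  rw [List.getD_eq_getElem _ _ hi', List.getD_eq_getElem _ _ hi,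
    List.getElem_insertIdx_of_lt h hi']

lemma gD_insert_self (l : List ℤ) (n : ℕ) (a : ℤ) (hn : n ≤ l.length) :
    (l.insertIdx n a).getD n 0 = a := by
  have hn' : n < (l.insertIdx n a).length := by
    rw [List.length_insertIdx_of_le_length hn]; omega
  rw [List.getD_eq_getElem _ _ hn', List.getElem_insertIdx_self hn']

lemma gD_insert_gt (l : List ℤ) (n i : ℕ) (a : ℤ) (h : n < i) (hn : n ≤ l.length) :
    (l.insertIdx n a).getD i 0 = l.getD (i - 1) 0 := by
  by_cases hi : i - 1 < l.length
  · have hi' : i < (l.insertIdx n a).length := by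
      rw [List.length_insertIdx_of_le_length hn]; omega
    rw [List.getD_eq_getElem _ _ hi', List.getD_eq_getElem _ _ hi]
    have hkey : i = n + (i - 1 - n) + 1 := by omega
    have h2 : n + (i - 1 - n) < l.length := by omega
    have := List.getElem_insertIdx_add_succ l a n (i - 1 - n) h2
    simp only [← hkey] at this
    rw [this]
    congr 1
    omega
  · rw [List.getD_eq_default _ _ (by omega : l.length ≤ i - 1),
      List.getD_eq_default]
    rw [List.length_insertIdx_of_le_length hn]; omega




/-- A tuple representative `[b_0, …, b_k]` of a simplex of `K(ℤ,1)` is nondegenerate iff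
consecutive entries are distinct. -/
def nondegZ (l : List ℤ) : Prop :=
  ∀ i, i + 1 < l.length → l.getD i 0 ≠ l.getD (i + 1) 0

/-- `ℓ` is the leading index of the tuple `[b_0, …, b_k]`: the smallest index with
`b_ℓ > b_{ℓ+1}`. -/
def leadIdx (l : List ℤ) (ℓ : ℕ) : Prop :=
  ℓ + 1 < l.length ∧ (∀ i < ℓ, l.getD i 0 < l.getD (i + 1) 0) ∧
    l.getD (ℓ + 1) 0 < l.getD ℓ 0

/-- `b_ℓ, …, b_m` is the leading alternating segment of the tuple: with `v = b_ℓ`,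
`u = b_{ℓ+1}`, it is the maximal contiguous segment starting at position `ℓ` containing
only the values `u` and `v`. -/
def las (l : List ℤ) (ℓ m : ℕ) : Prop :=
  ℓ + 1 ≤ m ∧ m < l.length ∧
    (∀ i, ℓ ≤ i → i ≤ m → l.getD i 0 = l.getD ℓ 0 ∨ l.getD i 0 = l.getD (ℓ + 1) 0) ∧
    (m + 1 = l.length ∨
      (l.getD (m + 1) 0 ≠ l.getD ℓ 0 ∧ l.getD (m + 1) 0 ≠ l.getD (ℓ + 1) 0))

/-- The bubblesort vector field, as a relation: `vbsRel σ τ` holds iff `σ` is a source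
simplex (its leading alternating segment `b_ℓ, …, b_m` ends with the smaller value `u`)
and `τ = V_bs σ` is obtained from `σ` by inserting another `v = b_ℓ` right after
position `m`. -/
def vbsRel (σ τ : List ℤ) : Prop :=
  ∃ ℓ m, leadIdx σ ℓ ∧ las σ ℓ m ∧ σ.getD m 0 = σ.getD (ℓ + 1) 0 ∧
    τ = σ.insertIdx (m + 1) (σ.getD ℓ 0)

/-- A source simplex of the bubblesort field. -/
def isSrcBS (l : List ℤ) : Prop := nondegZ l ∧ ∃ τ, vbsRel l τ

/-- A target simplex of the bubblesort field. -/
def isTgtBS (l : List ℤ) : Prop := ∃ σ, nondegZ σ ∧ vbsRel σ l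

/-- The edges of the `V∂`-graph of the bubblesort field: from a source `σ` to `V_bs σ`,
and from a target `τ` to any nondegenerate face `∂ᵢτ` (deletion of the `i`-th component)
that is a source or critical simplex not matched to `τ`. -/
def edgeBS (x y : List ℤ) : Prop :=
  (isSrcBS x ∧ vbsRel x y) ∨
  (isTgtBS x ∧ ∃ i < x.length, y = x.eraseIdx i ∧ nondegZ y ∧ ¬ vbsRel y x ∧ ¬ isTgtBS y)


/-- A simplex in the image of `V_bs` cannot itself be a source. -/
lemma tgt_not_vbs {σ x τ' : List ℤ} (h1 : vbsRel σ x) (h2 : vbsRel x τ') : False := by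
  obtain ⟨ℓ, m, ⟨hℓlt, hasc, hdesc⟩, ⟨hℓm, hm, hmem, hbd⟩, hend, hx⟩ := h1
  obtain ⟨ℓ', m', ⟨hℓlt', hasc', hdesc'⟩, ⟨hℓm', hm', hmem', hbd'⟩, hend', -⟩ := h2
  set v := σ.getD ℓ 0 with hv
  set u := σ.getD (ℓ + 1) 0 with hu
  have hmσ : m + 1 ≤ σ.length := hm
  have hlen : x.length = σ.length + 1 := by
    rw [hx, List.length_insertIdx_of_le_length hmσ]
  have hA : ∀ i, i ≤ m → x.getD i 0 = σ.getD i 0 := fun i hi => by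
    rw [hx]; exact gD_insert_lt σ (m + 1) i v (by omega) hmσ
  have hB : x.getD (m + 1) 0 = v := by rw [hx]; exact gD_insert_self σ (m + 1) v hmσ
  have hC : ∀ i, m + 2 ≤ i → x.getD i 0 = σ.getD (i - 1) 0 := fun i hi => by
    rw [hx]; exact gD_insert_gt σ (m + 1) i v (by omega) hmσ
  -- step 1 : ℓ' = ℓ
  have hℓeq : ℓ' = ℓ := by
    rcases lt_trichotomy ℓ' ℓ with h | h | h
    · have e1 := hA ℓ' (by omega)
      have e2 := hA (ℓ' + 1) (by omega)
      have := hasc ℓ' h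
      rw [← e1, ← e2] at this
      linarith [hdesc']
    · exact h
    · have e1 := hA ℓ (by omega)
      have e2 := hA (ℓ + 1) (by omega)
      have := hasc' ℓ h
      rw [e1, e2] at this
      linarith [hdesc]
  subst hℓeq
  have exℓ : x.getD ℓ' 0 = v := by rw [hA ℓ' (by omega)]
  have exℓ1 : x.getD (ℓ' + 1) 0 = u := by rw [hA (ℓ' + 1) (by omega)]
  -- membership up to m+1 in x
  have hmemx : ∀ i, ℓ' ≤ i → i ≤ m + 1 → x.getD i 0 = v ∨ x.getD i 0 = u := by
    intro i h1 h2
    rcases Nat.lt_or_ge i (m + 1) with h3 | h3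
    · rw [hA i (by omega)]; exact hmem i h1 (by omega)
    · have : i = m + 1 := by omega
      rw [this, hB]; left; rfl
  -- step 2 : m' = m + 1
  have hmeq : m' = m + 1 := by
    rcases lt_trichotomy m' (m + 1) with h | h | h
    · rcases hbd' with h4 | ⟨h4, h5⟩
      · omega
      · rcases hmemx (m' + 1) (by omega) (by omega) with h6 | h6
        · exact absurd (h6.trans exℓ.symm) h4
        · exact absurd (h6.trans exℓ1.symm) h5
    · exact h
    · rcases hbd with h4 | ⟨h4, h5⟩
      · omega
      · have e := hC (m + 2) (le_refl _)
        simp only [show m + 2 - 1 = m + 1 by omega] at e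
        rcases hmem' (m + 2) (by omega) (by omega) with h6 | h6
        · exfalso; rw [e, exℓ] at h6; exact h4 h6
        · exfalso; rw [e, exℓ1] at h6; exact h5 h6
  -- conclude
  rw [hmeq, hB, exℓ1] at hend'
  have : u < v := hdesc
  omega

lemma tgt_not_src {x : List ℤ} (h : isTgtBS x) : ¬ isSrcBS x := by
  rintro ⟨-, τ', hrel⟩
  obtain ⟨σ', -, hrel'⟩ := h
  exact tgt_not_vbs hrel' hrel
lemma reach_inv {σ : List ℤ} (hσ : isSrcBS σ) {τ : List ℤ}
    (h : Relation.ReflTransGen edgeBS σ τ) :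
    (∀ z ∈ τ, z ∈ σ) ∧
      ((τ.length = σ.length ∧ ¬ isTgtBS τ) ∨ (τ.length = σ.length + 1 ∧ isTgtBS τ)) := by
  induction h with
  | refl => exact ⟨fun z hz => hz, Or.inl ⟨rfl, fun ht => tgt_not_src ht hσ⟩⟩
  | tail h1 h2 ih =>
    rename_i b c
    rcases h2 with ⟨hsrcb, hrel⟩ | ⟨htgtb, i, hi, hc, hnd, hnv, hnt⟩
    · have hrel' := hrel
      obtain ⟨ℓ, m, hL, hS, -, hc⟩ := hrel
      have hm1 : m + 1 ≤ b.length := hS.2.1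
      have hℓ : ℓ < b.length := by have := hL.1; omega
      have hvmem : b.getD ℓ 0 ∈ b := by
        rw [List.getD_eq_getElem _ _ hℓ]; exact List.getElem_mem hℓ
      constructor
      · intro z hz
        rw [hc, List.mem_insertIdx hm1] at hz
        rcases hz with rfl | hz
        · exact ih.1 _ hvmem
        · exact ih.1 _ hz
      · right
        have hnb : ¬ isTgtBS b := fun ht => tgt_not_src ht hsrcb
        rcases ih.2 with ⟨hlen, -⟩ | ⟨-, ht⟩
        · constructor
          · rw [hc, List.length_insertIdx_of_le_length hm1, hlen]
          · exact ⟨b, hsrcb.1, hrel'⟩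
        · exact absurd ht hnb
    · constructor
      · intro z hz
        rw [hc] at hz
        exact ih.1 _ (List.eraseIdx_subset hz)
      · left
        rcases ih.2 with ⟨-, hnb⟩ | ⟨hlen, -⟩
        · exact absurd htgtb hnb
        · refine ⟨?_, hnt⟩
          rw [hc, List.length_eraseIdx]
          simp only [hi, if_true]
          omega

theorem stmt13 (σ : List ℤ) (hσ : isSrcBS σ) :
    (∀ τ, Relation.ReflTransGen edgeBS σ τ → ∀ z ∈ τ, z ∈ σ) ∧
    {τ | Relation.ReflTransGen edgeBS σ τ ∧ isSrcBS τ}.Finite ∧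
    {τ | Relation.ReflTransGen edgeBS σ τ ∧ isSrcBS τ}.ncard ≤ σ.length ^ σ.length := by
  set F : (Fin σ.length → Fin σ.length) → List ℤ :=
    fun f => List.ofFn fun i => σ.get (f i) with hF
  have hsub : {τ | Relation.ReflTransGen edgeBS σ τ ∧ isSrcBS τ} ⊆ Set.range F := by
    rintro τ ⟨hr, hsrcτ⟩
    have inv := reach_inv hσ hr
    have htlen : τ.length = σ.length := by
      rcases inv.2 with ⟨h, -⟩ | ⟨-, ht⟩
      · exact h
      · exact absurd hsrcτ (tgt_not_src ht)
    have hτ : ∀ (i : ℕ) (h : i < τ.length), τ[i] ∈ σ :=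
      fun i h => inv.1 _ (List.getElem_mem h)
    refine ⟨fun i => ⟨List.idxOf (τ[(i : ℕ)]'(by omega)) σ,
      List.idxOf_lt_length_iff.2 (hτ _ _)⟩, ?_⟩
    apply List.ext_getElem
    · simp [hF, htlen]
    · intro i h1 h2
      simp only [hF, List.getElem_ofFn, List.get_eq_getElem]
      exact List.getElem_idxOf _
  have hfin : (Set.range F).Finite := Set.finite_range F
  refine ⟨fun τ h => (reach_inv hσ h).1, hfin.subset hsub, ?_⟩
  calc {τ | Relation.ReflTransGen edgeBS σ τ ∧ isSrcBS τ}.ncard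
      ≤ (Set.range F).ncard := Set.ncard_le_ncard hsub hfin
    _ = (F '' Set.univ).ncard := by rw [Set.image_univ]
    _ ≤ (Set.univ : Set (Fin σ.length → Fin σ.length)).ncard :=
        Set.ncard_image_le Set.finite_univ
    _ = σ.length ^ σ.length := by
        rw [Set.ncard_univ, Nat.card_eq_fintype_card]
        simp [Fintype.card_fun]
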